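/- Let w = w₁ + … + w_s ∈ V with each w_k a nonzero weight vector, w_k ∈ V_{α_k} for pairwise distinct weights α_k ∈ Δ(V). If m_𝔤(exp(π(X))w) ∈ 𝔞 for every X ∈ 𝔞, then the subspace W = ℝw₁ ⊕ … ⊕ ℝw_s is a nice space; equivalently, ⟨π(Y)w_j, w_k⟩ = 0 for every root γ ∈ Δ(𝔤), every Y ∈ 𝔤_γ, and all 1 ≤ j, k ≤ s. -/

import Mathlib

open scoped InnerProductSpace
open Finset
open scoped Classical

/-- The (restricted) moment map of a linear family of operators `π` on an inner
product space `V`: `momentMap π v` is the unique element of `E` with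
`⟪momentMap π v, Y⟫ = ⟪π Y v, v⟫ / ‖v‖²` for all `Y`. -/
noncomputable def momentMap {E V : Type*} [NormedAddCommGroup E] [InnerProductSpace ℝ E]
    [FiniteDimensional ℝ E] [NormedAddCommGroup V] [InnerProductSpace ℝ V]
    (π : E →ₗ[ℝ] V →L[ℝ] V) (v : V) : E :=
  (InnerProductSpace.toDual ℝ E).symm <| LinearMap.toContinuousLinearMap
    { toFun := fun X => ⟪(π X) v, v⟫_ℝ / ‖v‖ ^ 2
      map_add' := fun X Y => by
        simp [map_add, ContinuousLinearMap.add_apply, inner_add_left, add_div]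
      map_smul' := fun c X => by
        simp [map_smul, ContinuousLinearMap.smul_apply, inner_smul_left, mul_div_assoc] }

/-- The weight space `V_α = {v : ∀ X ∈ 𝔞, π(X)v = ⟪α,X⟫v}`. -/
def wtSpace {E V : Type*} [NormedAddCommGroup E] [InnerProductSpace ℝ E]
    [NormedAddCommGroup V] [InnerProductSpace ℝ V]
    (π : E →ₗ[ℝ] V →L[ℝ] V) (𝔞 : Submodule ℝ E) (α : E) : Submodule ℝ V where
  carrier := {v | ∀ X ∈ 𝔞, (π X) v = ⟪α, X⟫_ℝ • v}
  add_mem' := fun {a b} ha hb X hX => by rw [map_add, ha X hX, hb X hX, smul_add]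
  zero_mem' := fun X hX => by simp
  smul_mem' := fun t a ha X hX => by rw [map_smul, ha X hX, smul_comm]

/-- The (restricted) root space `𝔤_γ = {Y : ∀ X ∈ 𝔞, [X,Y] = ⟪γ,X⟫Y}`. -/
def rootSpace {E : Type*} [NormedAddCommGroup E] [InnerProductSpace ℝ E]
    (bk : E →ₗ[ℝ] E →ₗ[ℝ] E) (𝔞 : Submodule ℝ E) (γ : E) : Submodule ℝ E where
  carrier := {Y | ∀ X ∈ 𝔞, bk X Y = ⟪γ, X⟫_ℝ • Y}
  add_mem' := fun {a b} ha hb X hX => by rw [map_add, ha X hX, hb X hX, smul_add]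
  zero_mem' := fun X hX => by simp
  smul_mem' := fun t a ha X hX => by rw [map_smul, ha X hX, smul_comm]

/-- A subspace `W ⊆ V` is `A`-invariant if `π(X)W ⊆ W` for all `X ∈ 𝔞`. -/
def AInvariant {E V : Type*} [NormedAddCommGroup E] [InnerProductSpace ℝ E]
    [NormedAddCommGroup V] [InnerProductSpace ℝ V]
    (π : E →ₗ[ℝ] V →L[ℝ] V) (𝔞 : Submodule ℝ E) (W : Submodule ℝ V) : Prop :=
  ∀ X ∈ 𝔞, ∀ w ∈ W, (π X) w ∈ W

/-- An `A`-invariant subspace `W ⊆ V` is a nice space if `momentMap π w ∈ 𝔞` for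
every nonzero `w ∈ W`. -/
def IsNiceSpace {E V : Type*} [NormedAddCommGroup E] [InnerProductSpace ℝ E]
    [FiniteDimensional ℝ E] [NormedAddCommGroup V] [InnerProductSpace ℝ V]
    (π : E →ₗ[ℝ] V →L[ℝ] V) (𝔞 : Submodule ℝ E) (W : Submodule ℝ V) : Prop :=
  AInvariant π 𝔞 W ∧ ∀ w ∈ W, w ≠ 0 → momentMap π w ∈ 𝔞


set_option maxHeartbeats 1000000 in
lemma mm_exp_eigen {V : Type*} [NormedAddCommGroup V] [InnerProductSpace ℝ V]
    [FiniteDimensional ℝ V] (A : V →L[ℝ] V) (v : V) (c : ℝ) (h : A v = c • v) :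
    NormedSpace.exp A v = Real.exp c • v := by
  have hpow : ∀ n : ℕ, (A ^ n) v = c ^ n • v := by
    intro n; induction n with
    | zero => simp
    | succ n ih =>
      rw [pow_succ, pow_succ, ContinuousLinearMap.mul_apply, h, map_smul, ih, smul_smul, mul_comm]
  have h1 : HasSum (fun n : ℕ => ((n.factorial : ℝ)⁻¹ • A ^ n) v) (NormedSpace.exp A v) :=
    (NormedSpace.exp_series_hasSum_exp' (𝕂 := ℝ) A).mapL (ContinuousLinearMap.apply ℝ V v)
  have h2 : HasSum (fun n : ℕ => ((n.factorial : ℝ)⁻¹ • A ^ n) v) (Real.exp c • v) := by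
    have h3 : HasSum (fun n : ℕ => (n.factorial : ℝ)⁻¹ • c ^ n) (Real.exp c) := by
      rw [Real.exp_eq_exp_ℝ]; exact NormedSpace.exp_series_hasSum_exp' c
    have := h3.smul_const v
    convert this using 2 with n
    rw [ContinuousLinearMap.smul_apply, hpow, smul_smul, smul_eq_mul]
  exact h1.unique h2

lemma mm_momentMap_inner {E V : Type*} [NormedAddCommGroup E] [InnerProductSpace ℝ E]
    [FiniteDimensional ℝ E] [NormedAddCommGroup V] [InnerProductSpace ℝ V]
    (π : E →ₗ[ℝ] V →L[ℝ] V) (v : V) (Y : E) :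
    ⟪momentMap π v, Y⟫_ℝ = ⟪(π Y) v, v⟫_ℝ / ‖v‖ ^ 2 := by
  rw [momentMap, InnerProductSpace.toDual_symm_apply]
  rfl

lemma mm_weight_orth {E V : Type*} [NormedAddCommGroup E] [InnerProductSpace ℝ E]
    [NormedAddCommGroup V] [InnerProductSpace ℝ V]
    (π : E →ₗ[ℝ] V →L[ℝ] V) (𝔞 : Submodule ℝ E)
    (hsa : ∀ X ∈ 𝔞, ∀ v w : V, ⟪(π X) v, w⟫_ℝ = ⟪v, (π X) w⟫_ℝ)
    (β δ : E) (hβ : β ∈ 𝔞) (hδ : δ ∈ 𝔞) (hne : β ≠ δ) (u v : V)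
    (hu : ∀ X ∈ 𝔞, (π X) u = ⟪β, X⟫_ℝ • u) (hv : ∀ X ∈ 𝔞, (π X) v = ⟪δ, X⟫_ℝ • v) :
    ⟪u, v⟫_ℝ = 0 := by
  have hX : β - δ ∈ 𝔞 := 𝔞.sub_mem hβ hδ
  have h := hsa (β - δ) hX u v
  rw [hu (β - δ) hX, hv (β - δ) hX, real_inner_smul_left, real_inner_smul_right] at h
  have hpos : (0:ℝ) < ⟪β - δ, β - δ⟫_ℝ := by rw [real_inner_self_eq_norm_sq]; exact pow_pos (norm_pos_iff.mpr (sub_ne_zero.mpr hne)) 2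
  have hdiff : ⟪β, β - δ⟫_ℝ - ⟪δ, β - δ⟫_ℝ = ⟪β - δ, β - δ⟫_ℝ := by rw [← inner_sub_left]
  have : (⟪β, β - δ⟫_ℝ - ⟪δ, β - δ⟫_ℝ) * ⟪u, v⟫_ℝ = 0 := by ring_nf; ring_nf at h; linarith
  rcases mul_eq_zero.mp this with h' | h'
  · exact absurd h' (by rw [hdiff]; positivity)
  · exact h'

lemma mm_char_indep {E : Type*} [NormedAddCommGroup E] [InnerProductSpace ℝ E]
    (𝔞 : Submodule ℝ E) :
    ∀ B : Finset E, (∀ β ∈ B, β ∈ 𝔞) → ∀ d : E → ℝ,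
      (∀ X ∈ 𝔞, ∑ β ∈ B, d β * Real.exp ⟪β, X⟫_ℝ = 0) → ∀ β ∈ B, d β = 0 := by
  classical
  intro B
  induction B using Finset.strongInduction with
  | _ B ih =>
    intro hB d hd β₀ hβ₀
    have hothers : ∀ β ∈ B.erase β₀, d β = 0 := by
      intro β hβ
      have hsub : B.erase β₀ ⊂ B := Finset.erase_ssubset hβ₀
      have hstep : ∀ X ∈ 𝔞, d β * (Real.exp ⟪β, X⟫_ℝ - Real.exp ⟪β₀, X⟫_ℝ) = 0 := by
        intro X hX
        refine ih _ hsub (fun β' hβ' => hB β' (Finset.mem_of_mem_erase hβ'))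
          (fun β' => d β' * (Real.exp ⟪β', X⟫_ℝ - Real.exp ⟪β₀, X⟫_ℝ)) ?_ β hβ
        intro X' hX'
        have e1 := hd (X + X') (𝔞.add_mem hX hX')
        have e2 := hd X' hX'
        have hz : d β₀ * (Real.exp ⟪β₀, X⟫_ℝ - Real.exp ⟪β₀, X⟫_ℝ) * Real.exp ⟪β₀, X'⟫_ℝ = 0 := by
          ring
        calc ∑ β' ∈ B.erase β₀, d β' * (Real.exp ⟪β', X⟫_ℝ - Real.exp ⟪β₀, X⟫_ℝ)
              * Real.exp ⟪β', X'⟫_ℝ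
            = ∑ β' ∈ B, d β' * (Real.exp ⟪β', X⟫_ℝ - Real.exp ⟪β₀, X⟫_ℝ)
              * Real.exp ⟪β', X'⟫_ℝ := Finset.sum_erase B hz
          _ = (∑ β' ∈ B, d β' * Real.exp ⟪β', X + X'⟫_ℝ)
              - Real.exp ⟪β₀, X⟫_ℝ * ∑ β' ∈ B, d β' * Real.exp ⟪β', X'⟫_ℝ := by
              rw [Finset.mul_sum, ← Finset.sum_sub_distrib]
              refine Finset.sum_congr rfl fun β' _ => ?_
              rw [inner_add_right, Real.exp_add]; ring
          _ = 0 := by rw [e1, e2]; ring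
      have hXm : β - β₀ ∈ 𝔞 := 𝔞.sub_mem (hB β (Finset.mem_of_mem_erase hβ)) (hB β₀ hβ₀)
      have h := hstep (β - β₀) hXm
      have hne : β ≠ β₀ := Finset.ne_of_mem_erase hβ
      have hpos : ⟪β₀, β - β₀⟫_ℝ < ⟪β, β - β₀⟫_ℝ := by
        have h1 : ⟪β, β - β₀⟫_ℝ - ⟪β₀, β - β₀⟫_ℝ = ⟪β - β₀, β - β₀⟫_ℝ := by rw [← inner_sub_left]
        have h2 : (0:ℝ) < ⟪β - β₀, β - β₀⟫_ℝ := by rw [real_inner_self_eq_norm_sq]; exact pow_pos (norm_pos_iff.mpr (sub_ne_zero.mpr hne)) 2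
        linarith
      have hne2 : Real.exp ⟪β, β - β₀⟫_ℝ - Real.exp ⟪β₀, β - β₀⟫_ℝ ≠ 0 := by
        have := Real.exp_lt_exp.mpr hpos; linarith
      exact (mul_eq_zero.mp h).resolve_right hne2
    have h0 := hd 0 𝔞.zero_mem
    rw [Finset.sum_eq_single β₀
      (fun β hβ hne => by rw [hothers β (Finset.mem_erase.mpr ⟨hne, hβ⟩), zero_mul])
      (fun h => absurd hβ₀ h)] at h0
    simpa using h0

/-- if `w = w₁ + … + w_s` is a sum of nonzero weight vectors for pairwise
distinct weights and `m_𝔤(exp(π X)w) ∈ 𝔞` for every `X ∈ 𝔞`, then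
`W = ℝw₁ ⊕ … ⊕ ℝw_s` is a nice space; equivalently `⟪π(Y)w_j, w_k⟫ = 0` for every
root `γ`, every `Y ∈ 𝔤_γ` and all `j, k`. -/
theorem niceElement_span_isNice
    {𝔤 V : Type*} [NormedAddCommGroup 𝔤] [InnerProductSpace ℝ 𝔤] [FiniteDimensional ℝ 𝔤]
    [NormedAddCommGroup V] [InnerProductSpace ℝ V] [FiniteDimensional ℝ V]
    -- the Lie bracket of `𝔤` and the representation `π : 𝔤 → 𝔤𝔩(V)`:
    (bk : 𝔤 →ₗ[ℝ] 𝔤 →ₗ[ℝ] 𝔤)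
    (hbk_alt : ∀ X : 𝔤, bk X X = 0)
    (hbk_jac : ∀ X Y Z : 𝔤, bk X (bk Y Z) + bk Y (bk Z X) + bk Z (bk X Y) = 0)
    (π : 𝔤 →ₗ[ℝ] V →L[ℝ] V)
    (hrep : ∀ X Y : 𝔤, π (bk X Y) = π X * π Y - π Y * π X)
    -- `𝔞` is an abelian subalgebra acting by self-adjoint operators:
    (𝔞 : Submodule ℝ 𝔤)
    (hab : ∀ X ∈ 𝔞, ∀ Y ∈ 𝔞, bk X Y = 0)
    (hsa : ∀ X ∈ 𝔞, ∀ v w : V, ⟪(π X) v, w⟫_ℝ = ⟪v, (π X) w⟫_ℝ)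
    -- roots and weights:
    (Δ𝔤 : Finset 𝔤) (hΔ𝔤 : ∀ γ ∈ Δ𝔤, γ ∈ 𝔞 ∧ γ ≠ 0)
    (ΔV : Finset 𝔤) (hΔV : ∀ α ∈ ΔV, α ∈ 𝔞)
    -- `𝔤₀ = 𝔞 ⊕ 𝔪` is the centralizer of `𝔞`, `π` is skew-adjoint on `𝔪`:
    (𝔪 : Submodule ℝ 𝔤)
    (hskew : ∀ Y ∈ 𝔪, ∀ v w : V, ⟪(π Y) v, w⟫_ℝ = -⟪v, (π Y) w⟫_ℝ)
    (h𝔞𝔪 : ∀ X ∈ 𝔞, ∀ Y ∈ 𝔪, ⟪X, Y⟫_ℝ = 0)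
    (h𝔤₀ : ∀ Z : 𝔤, (∀ X ∈ 𝔞, bk X Z = 0) ↔ Z ∈ 𝔞 ⊔ 𝔪)
    -- the orthogonal restricted-root space decomposition of `𝔤`:
    (h𝔤dec : (𝔞 ⊔ 𝔪) ⊔ (⨆ γ ∈ Δ𝔤, rootSpace bk 𝔞 γ) = ⊤)
    (h𝔤orth : ∀ γ ∈ Δ𝔤, ∀ Y ∈ rootSpace bk 𝔞 γ, ∀ Z : 𝔤,
      (Z ∈ 𝔞 ⊔ 𝔪 ∨ ∃ γ' ∈ Δ𝔤, γ' ≠ γ ∧ Z ∈ rootSpace bk 𝔞 γ') → ⟪Y, Z⟫_ℝ = 0)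
    -- the weight space decomposition of `V`:
    (hVdec : (⨆ α ∈ ΔV, wtSpace π 𝔞 α) = ⊤)
    (s : ℕ) (wv : Fin s → V) (a : Fin s → 𝔤)
    (ha_inj : Function.Injective a) (haΔ : ∀ k, a k ∈ ΔV)
    (hwv : ∀ k, wv k ∈ wtSpace π 𝔞 (a k)) (hwv0 : ∀ k, wv k ≠ 0)
    (w : V) (hw : w = ∑ k, wv k)
    (hmm : ∀ X ∈ 𝔞, momentMap π ((NormedSpace.exp (π X)) w) ∈ 𝔞)
    :
    IsNiceSpace π 𝔞 (Submodule.span ℝ (Set.range wv)) ∧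
    ∀ γ ∈ Δ𝔤, ∀ Y ∈ rootSpace bk 𝔞 γ, ∀ j k : Fin s, ⟪(π Y) (wv j), wv k⟫_ℝ = 0 := by
  classical
  have hwv' : ∀ k, ∀ X ∈ 𝔞, (π X) (wv k) = ⟪a k, X⟫_ℝ • wv k := fun k => hwv k
  -- KEY STEP: the vanishing of all ⟪π(Y) wⱼ, w_k⟫ for root vectors Y.
  have key : ∀ γ ∈ Δ𝔤, ∀ Y ∈ rootSpace bk 𝔞 γ, ∀ j k : Fin s, ⟪(π Y) (wv j), wv k⟫_ℝ = 0 := by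
    intro γ hγ Y hY j₀ k₀
    obtain ⟨hγ𝔞, hγ0⟩ := hΔ𝔤 γ hγ
    have hY' : ∀ X ∈ 𝔞, bk X Y = ⟪γ, X⟫_ℝ • Y := hY
    -- π(Y) shifts weights by γ
    have hshift : ∀ j : Fin s, ∀ X ∈ 𝔞,
        (π X) ((π Y) (wv j)) = ⟪a j + γ, X⟫_ℝ • (π Y) (wv j) := by
      intro j X hX
      have h1 := congrArg (fun T : V →L[ℝ] V => T (wv j)) (hrep X Y)
      simp only [ContinuousLinearMap.sub_apply, ContinuousLinearMap.mul_apply] at h1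
      rw [hY' X hX, map_smul, ContinuousLinearMap.smul_apply] at h1
      rw [hwv' j X hX, map_smul] at h1
      rw [eq_sub_iff_add_eq] at h1
      rw [← h1, inner_add_left, add_smul]
      abel
    -- vanishing for non-matching weights
    have cvanish : ∀ j k : Fin s, a k ≠ a j + γ → ⟪(π Y) (wv j), wv k⟫_ℝ = 0 := by
      intro j k hne
      exact mm_weight_orth π 𝔞 hsa (a j + γ) (a k)
        (𝔞.add_mem (hΔV _ (haΔ j)) hγ𝔞) (hΔV _ (haΔ k)) (Ne.symm hne)
        ((π Y) (wv j)) (wv k) (hshift j) (hwv' k)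
    -- the moment map condition gives a family of exponential identities
    have hsum : ∀ X ∈ 𝔞, ∑ p : Fin s × Fin s,
        ⟪(π Y) (wv p.1), wv p.2⟫_ℝ * Real.exp ⟪a p.1 + a p.2, X⟫_ℝ = 0 := by
      intro X hX
      set v := (NormedSpace.exp (π X)) w with hvdef
      have hv : v = ∑ k, Real.exp ⟪a k, X⟫_ℝ • wv k := by
        rw [hvdef, hw, map_sum]
        exact Finset.sum_congr rfl fun k _ => mm_exp_eigen (π X) (wv k) _ (hwv' k X hX)
      have h0 : ⟪(π Y) v, v⟫_ℝ = 0 := by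
        by_cases hv0 : v = 0
        · simp [hv0]
        · have hm := hmm X hX
          have h1 : ⟪momentMap π v, Y⟫_ℝ = 0 := by
            rw [real_inner_comm]
            exact h𝔤orth γ hγ Y hY _ (Or.inl (Submodule.mem_sup_left hm))
          rw [mm_momentMap_inner] at h1
          have hn : (‖v‖:ℝ) ^ 2 ≠ 0 := pow_ne_zero _ (norm_ne_zero_iff.mpr hv0)
          exact (div_eq_zero_iff.mp h1).resolve_right hn
      rw [hv, map_sum, sum_inner] at h0
      rw [← h0, Fintype.sum_prod_type]
      refine Finset.sum_congr rfl fun j _ => ?_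
      rw [inner_sum]
      refine Finset.sum_congr rfl fun k _ => ?_
      rw [map_smul, real_inner_smul_left, real_inner_smul_right, inner_add_left, Real.exp_add]
      ring
    -- regroup according to the value of `a j + a k` and use independence of characters
    set c : Fin s × Fin s → ℝ := fun p => ⟪(π Y) (wv p.1), wv p.2⟫_ℝ with hc
    set b : Fin s × Fin s → 𝔤 := fun p => a p.1 + a p.2 with hb
    set B : Finset 𝔤 := Finset.univ.image b with hB
    set d : 𝔤 → ℝ := fun β => ∑ p ∈ Finset.univ.filter (fun p => b p = β), c p with hdd
    have hgroup : ∀ X ∈ 𝔞, ∑ β ∈ B, d β * Real.exp ⟪β, X⟫_ℝ = 0 := by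
      intro X hX
      calc ∑ β ∈ B, d β * Real.exp ⟪β, X⟫_ℝ
          = ∑ β ∈ B, ∑ p ∈ Finset.univ.filter (fun p => b p = β),
              c p * Real.exp ⟪b p, X⟫_ℝ := by
            refine Finset.sum_congr rfl fun β hβ => ?_
            rw [hdd, Finset.sum_mul]
            exact Finset.sum_congr rfl fun p hp => by
              rw [(Finset.mem_filter.mp hp).2]
        _ = ∑ p : Fin s × Fin s, c p * Real.exp ⟪b p, X⟫_ℝ :=
            Finset.sum_fiberwise_of_maps_to
              (fun p _ => Finset.mem_image_of_mem b (Finset.mem_univ p)) _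
        _ = 0 := hsum X hX
    have hd0 : ∀ β ∈ B, d β = 0 := by
      refine mm_char_indep 𝔞 B ?_ d hgroup
      intro β hβ
      obtain ⟨p, _, rfl⟩ := Finset.mem_image.mp hβ
      exact 𝔞.add_mem (hΔV _ (haΔ p.1)) (hΔV _ (haΔ p.2))
    by_cases hcase : a k₀ = a j₀ + γ
    · have hβ₀ : b (j₀, k₀) ∈ B := Finset.mem_image_of_mem b (Finset.mem_univ _)
      have hd : ∑ p ∈ Finset.univ.filter (fun p => b p = b (j₀, k₀)), c p = 0 := hd0 _ hβ₀
      rw [Finset.sum_eq_single (j₀, k₀)] at hd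
      · exact hd
      · intro p hp hpne
        by_cases h2 : a p.2 = a p.1 + γ
        · exfalso
          apply hpne
          have hbp : a p.1 + a p.2 = a j₀ + a k₀ := (Finset.mem_filter.mp hp).2
          rw [h2, hcase] at hbp
          have hadd : a p.1 + a p.1 = a j₀ + a j₀ := by
            have := hbp
            rw [← add_assoc, ← add_assoc] at this
            exact add_right_cancel this
          have h1 : a p.1 = a j₀ := by
            have h2s : (2 : ℝ) • a p.1 = (2 : ℝ) • a j₀ := by
              rw [two_smul, two_smul]; exact hadd
            exact smul_right_injective 𝔤 (by norm_num : (2:ℝ) ≠ 0) h2s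
          have hp1 : p.1 = j₀ := ha_inj h1
          have hp2 : p.2 = k₀ := ha_inj (by rw [h2, h1, ← hcase])
          exact Prod.ext hp1 hp2
        · exact cvanish p.1 p.2 h2
      · intro h
        exact absurd (Finset.mem_filter.mpr
          ⟨Finset.mem_univ (j₀, k₀), (rfl : b (j₀, k₀) = b (j₀, k₀))⟩) h
    · exact cvanish j₀ k₀ hcase
  -- bilinear extension of `key` to the whole span
  have keyspan : ∀ γ ∈ Δ𝔤, ∀ Y ∈ rootSpace bk 𝔞 γ, ∀ x ∈ Submodule.span ℝ (Set.range wv),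
      ∀ y ∈ Submodule.span ℝ (Set.range wv), ⟪(π Y) x, y⟫_ℝ = 0 := by
    intro γ hγ Y hY x hx
    induction hx using Submodule.span_induction with
    | mem x hxm =>
      intro y hy
      induction hy using Submodule.span_induction with
      | mem y hym =>
        obtain ⟨j, rfl⟩ := hxm
        obtain ⟨k, rfl⟩ := hym
        exact key γ hγ Y hY j k
      | zero => simp
      | add y₁ y₂ _ _ ih1 ih2 => rw [inner_add_right, ih1, ih2]; ring
      | smul t y _ ih => rw [real_inner_smul_right, ih]; ring
    | zero => intro y hy; simp
    | add x₁ x₂ _ _ ih1 ih2 =>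
      intro y hy
      rw [map_add, inner_add_left, ih1 y hy, ih2 y hy]; ring
    | smul t x _ ih =>
      intro y hy
      rw [map_smul, real_inner_smul_left, ih y hy]; ring
  refine ⟨⟨?_, ?_⟩, key⟩
  · -- A-invariance
    intro X hX u hu
    induction hu using Submodule.span_induction with
    | mem x hxm =>
      obtain ⟨k, rfl⟩ := hxm
      rw [hwv' k X hX]
      exact Submodule.smul_mem _ _ (Submodule.subset_span ⟨k, rfl⟩)
    | zero => simp
    | add x₁ x₂ _ _ ih1 ih2 => rw [map_add]; exact Submodule.add_mem _ ih1 ih2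
    | smul t x _ ih => rw [map_smul]; exact Submodule.smul_mem _ _ ih
  · -- moment map condition
    intro u hu hu0
    set m := momentMap π u with hm
    have hm𝔪 : ∀ Z ∈ 𝔪, ⟪m, Z⟫_ℝ = 0 := by
      intro Z hZ
      rw [hm, mm_momentMap_inner]
      have h1 := hskew Z hZ u u
      have h2 : ⟪(π Z) u, u⟫_ℝ = ⟪u, (π Z) u⟫_ℝ := real_inner_comm _ _
      have : ⟪(π Z) u, u⟫_ℝ = 0 := by linarith
      rw [this, zero_div]
    have hmroot : ∀ Z ∈ (⨆ γ ∈ Δ𝔤, rootSpace bk 𝔞 γ), ⟪m, Z⟫_ℝ = 0 := by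
      intro Z hZ
      have hle : (⨆ γ ∈ Δ𝔤, rootSpace bk 𝔞 γ) ≤ LinearMap.ker (innerSL ℝ m : 𝔤 →ₗ[ℝ] ℝ) := by
        refine iSup_le fun γ => iSup_le fun hγ Yv hYv => ?_
        rw [LinearMap.mem_ker]
        show ⟪m, Yv⟫_ℝ = 0
        rw [hm, mm_momentMap_inner, keyspan γ hγ Yv hYv u hu u hu, zero_div]
      have := hle hZ
      rwa [LinearMap.mem_ker] at this
    have hmtop : m ∈ (𝔞 ⊔ 𝔪) ⊔ (⨆ γ ∈ Δ𝔤, rootSpace bk 𝔞 γ) := by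
      rw [h𝔤dec]; trivial
    obtain ⟨g₀, hg₀, y, hy, hsum'⟩ := Submodule.mem_sup.mp hmtop
    obtain ⟨X, hX, M, hM, rfl⟩ := Submodule.mem_sup.mp hg₀
    have hXy : ⟪X, y⟫_ℝ = 0 := by
      have hle : (⨆ γ ∈ Δ𝔤, rootSpace bk 𝔞 γ) ≤ LinearMap.ker (innerSL ℝ X : 𝔤 →ₗ[ℝ] ℝ) := by
        refine iSup_le fun γ => iSup_le fun hγ Yv hYv => ?_
        rw [LinearMap.mem_ker]
        show ⟪X, Yv⟫_ℝ = 0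
        rw [real_inner_comm]
        exact h𝔤orth γ hγ Yv hYv X (Or.inl (Submodule.mem_sup_left hX))
      have := hle hy
      rwa [LinearMap.mem_ker] at this
    have hXM : ⟪X, M⟫_ℝ = 0 := h𝔞𝔪 X hX M hM
    have hmM : ⟪m, M⟫_ℝ = 0 := hm𝔪 M hM
    have hmy : ⟪m, y⟫_ℝ = 0 := hmroot y hy
    have hmeq : m = X + (M + y) := by rw [← hsum', add_assoc]
    have hzero : M + y = 0 := by
      have hn : ⟪M + y, M + y⟫_ℝ = 0 := by
        have h1 : ⟪m, M + y⟫_ℝ = 0 := by rw [inner_add_right, hmM, hmy]; ring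
        have h2 : ⟪X, M + y⟫_ℝ = 0 := by rw [inner_add_right, hXM, hXy]; ring
        have h3 : ⟪m, M + y⟫_ℝ = ⟪X, M + y⟫_ℝ + ⟪M + y, M + y⟫_ℝ := by
          rw [hmeq, inner_add_left]
        rw [h1, h2] at h3; linarith
      exact inner_self_eq_zero.mp hn
    have hfin : m = X := by rw [hmeq, hzero, add_zero]
    rw [hfin]
    exact hX
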